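/- The polynomials 2xy and y² + w'(x), where w'(x) = (2N+1)x^{2N}, form a regular sequence in ℚ[x,y]. -/

import Mathlib

open MvPolynomial

private lemma primeX0' : Prime (X 0 : MvPolynomial (Fin 2) ℚ) := by
  rw [← MulEquiv.prime_iff (finSuccEquiv ℚ 1).toRingEquiv.toMulEquiv]
  have : (finSuccEquiv ℚ 1).toRingEquiv.toMulEquiv (X 0 : MvPolynomial (Fin 2) ℚ)
      = Polynomial.X := by
    simp [finSuccEquiv_X_zero]
  rw [this]; exact Polynomial.prime_X

private lemma primeX1' : Prime (X 1 : MvPolynomial (Fin 2) ℚ) := by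
  rw [← MulEquiv.prime_iff (renameEquiv ℚ (Equiv.swap (0:Fin 2) 1)).toRingEquiv.toMulEquiv]
  have : (renameEquiv ℚ (Equiv.swap (0:Fin 2) 1)).toRingEquiv.toMulEquiv
      (X 1 : MvPolynomial (Fin 2) ℚ) = X 0 := by simp
  rw [this]; exact primeX0'

/-- `2xy` and `y² + w'(x) = y² + (2N+1)x^{2N}` form a regular sequence in `ℚ[x,y]`:
`2xy` is a nonzerodivisor, and `y² + (2N+1)x^{2N}` is a nonzerodivisor in the
quotient `ℚ[x,y]/(2xy)`. -/
theorem xy_then_ysq_regular_sequence (N : ℕ) (hN : 1 ≤ N) :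
    (∀ p : MvPolynomial (Fin 2) ℚ, (C 2 * X 0 * X 1) * p = 0 → p = 0) ∧
    (∀ q : MvPolynomial (Fin 2) ℚ ⧸ Ideal.span {(C 2 * X 0 * X 1 : MvPolynomial (Fin 2) ℚ)},
      Ideal.Quotient.mk (Ideal.span {(C 2 * X 0 * X 1 : MvPolynomial (Fin 2) ℚ)})
          (X 1 ^ 2 + C ((2 * N + 1 : ℕ) : ℚ) * X 0 ^ (2 * N)) * q = 0 → q = 0) := by
  have hne : (C 2 * X 0 * X 1 : MvPolynomial (Fin 2) ℚ) ≠ 0 := by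
    refine mul_ne_zero (mul_ne_zero ?_ (X_ne_zero 0)) (X_ne_zero 1)
    exact C_ne_zero.mpr (two_ne_zero : (2:ℚ) ≠ 0)
  constructor
  · intro p hp
    rcases mul_eq_zero.mp hp with h | h
    · exact absurd h hne
    · exact h
  · intro q hq
    obtain ⟨f, rfl⟩ := Ideal.Quotient.mk_surjective q
    set g : MvPolynomial (Fin 2) ℚ :=
      X 1 ^ 2 + C ((2 * N + 1 : ℕ) : ℚ) * X 0 ^ (2 * N) with hg
    rw [← map_mul, Ideal.Quotient.eq_zero_iff_mem, Ideal.mem_span_singleton] at hq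
    rw [Ideal.Quotient.eq_zero_iff_mem, Ideal.mem_span_singleton]
    -- X 0 does not divide g
    have hx0 : ¬ (X 0 : MvPolynomial (Fin 2) ℚ) ∣ g := by
      rintro ⟨h, hh⟩
      have := congrArg (aeval ![(0 : Polynomial ℚ), Polynomial.X]) hh
      simp [hg, Matrix.cons_val_zero, Matrix.cons_val_one,
        zero_pow (by omega : 2 * N ≠ 0)] at this
    -- X 1 does not divide g
    have hx1 : ¬ (X 1 : MvPolynomial (Fin 2) ℚ) ∣ g := by
      rintro ⟨h, hh⟩
      have := congrArg (aeval ![(Polynomial.X : Polynomial ℚ), 0]) hh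
      simp [hg, Matrix.cons_val_zero, Matrix.cons_val_one] at this
      have := congrArg (Polynomial.eval (0:ℚ)) this
      simp at this
      have hpos : (0:ℚ) < 2 * (N:ℚ) + 1 := by positivity
      linarith
    -- X 1 does not divide X 0
    have hx10 : ¬ (X 1 : MvPolynomial (Fin 2) ℚ) ∣ X 0 := by
      rw [X_dvd_X]; simp
    obtain ⟨k, hk⟩ := hq
    -- X 0 divides g * f
    have h0 : (X 0 : MvPolynomial (Fin 2) ℚ) ∣ g * f := ⟨C 2 * X 1 * k, by rw [hk]; ring⟩
    obtain ⟨f1, hf1⟩ := (primeX0'.dvd_mul.mp h0).resolve_left hx0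
    have h1 : (X 1 : MvPolynomial (Fin 2) ℚ) ∣ g * (X 0 * f1) := by
      rw [← hf1]; exact ⟨C 2 * X 0 * k, by rw [hk]; ring⟩
    have h1' := (primeX1'.dvd_mul.mp h1).resolve_left hx1
    obtain ⟨f2, hf2⟩ := (primeX1'.dvd_mul.mp h1').resolve_left hx10
    refine ⟨C (1/2 : ℚ) * f2, ?_⟩
    rw [hf1, hf2]
    rw [show (C 2 * X 0 * X 1 : MvPolynomial (Fin 2) ℚ) * (C (1/2) * f2)
        = (C 2 * C (1/2)) * (X 0 * (X 1 * f2)) by ring, ← C_mul]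
    norm_num
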